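/- arXiv:2501.15029 — 2 statements merged into one kernel-verified Lean document; each statement's English description precedes it below -/
import Mathlib

section
/- The map Ψ(w,p) = (sqrt(2-|w|²)·w, (1-|w|²)·p) from (closed unit disk) × (unit circle) to the 3-sphere {(a,b) : |a|²+|b|²=1} is surjective, and it is injective when restricted to pairs with |w| < 1; moreover Ψ(w,p) = Ψ(w',p') with |w| = 1 implies w = w'. -/
open Complex

noncomputable def Psi (w p : ℂ) : ℂ × ℂ :=
  ((Real.sqrt (2 - ‖w‖ ^ 2) : ℂ) * w,
    ((1 - ‖w‖ ^ 2 : ℝ) : ℂ) * p)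

/-- Ψ is onto the 3-sphere, injective where |w| < 1, and determines w when |w| = 1. -/
theorem psi_surjective_and_injective :
    (∀ a b : ℂ, ‖a‖ ^ 2 + ‖b‖ ^ 2 = 1 →
      ∃ w p : ℂ, ‖w‖ ≤ 1 ∧ ‖p‖ = 1 ∧ Psi w p = (a, b)) ∧
    (∀ w p w' p' : ℂ, ‖w‖ < 1 → ‖p‖ = 1 →
      ‖w'‖ < 1 → ‖p'‖ = 1 →
      Psi w p = Psi w' p' → w = w' ∧ p = p') ∧
    (∀ w p w' p' : ℂ, ‖w‖ = 1 → ‖p‖ = 1 →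
      ‖w'‖ ≤ 1 → ‖p'‖ = 1 →
      Psi w p = Psi w' p' → w = w') := by
  refine ⟨?_, ?_, ?_⟩
  · -- surjectivity
    intro a b hab
    by_cases ha : a = 0
    · have hb : ‖b‖ = 1 := by
        have : ‖b‖ ^ 2 = 1 := by simpa [ha] using hab
        nlinarith [norm_nonneg b]
      exact ⟨0, b, by simp, hb, by simp [Psi, ha]⟩
    by_cases hb : b = 0
    · have ha1 : ‖a‖ = 1 := by
        have : ‖a‖ ^ 2 = 1 := by simpa [hb] using hab
        nlinarith [norm_nonneg a]
      refine ⟨a, 1, le_of_eq ha1, by simp, ?_⟩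
      refine Prod.ext ?_ ?_ <;> simp [Psi, ha1, hb]
      rw [show (2:ℝ) - 1 = 1 by norm_num, Real.sqrt_one]; simp
    · set β := ‖b‖ with hβ
      have hβ0 : 0 < β := norm_pos_iff.mpr hb
      have hβ1 : β ≤ 1 := by nlinarith [norm_nonneg a, sq_nonneg (‖a‖)]
      set r := Real.sqrt (1 - β) with hr
      have hr0 : 0 ≤ r := Real.sqrt_nonneg _
      have hr2 : r ^ 2 = 1 - β := Real.sq_sqrt (by linarith)
      have ha' : (‖a‖ : ℝ) ≠ 0 := norm_ne_zero_iff.mpr ha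
      set w := (r : ℂ) * (a / (‖a‖ : ℂ)) with hw
      have hwabs : ‖w‖ = r := by
        rw [hw, norm_mul, norm_div, Complex.norm_real, Complex.norm_real, Real.norm_eq_abs, Real.norm_eq_abs,
          _root_.abs_of_nonneg hr0, _root_.abs_of_nonneg (norm_nonneg a),
          div_self ha', mul_one]
      have hkey : Real.sqrt (2 - r ^ 2) * r = ‖a‖ := by
        have h1 : (2 : ℝ) - r ^ 2 = 1 + β := by rw [hr2]; ring
        have h2 : Real.sqrt (2 - r ^ 2) * r = Real.sqrt ((1 + β) * (1 - β)) := by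
          rw [h1, hr, ← Real.sqrt_mul (by linarith)]
        have h3 : (1 + β) * (1 - β) = ‖a‖ ^ 2 := by nlinarith
        rw [h2, h3, Real.sqrt_sq (norm_nonneg a)]
      refine ⟨w, b / (β : ℂ), ?_, ?_, ?_⟩
      · rw [hwabs, hr]
        calc Real.sqrt (1 - β) ≤ Real.sqrt 1 := Real.sqrt_le_sqrt (by linarith)
        _ = 1 := Real.sqrt_one
      · rw [norm_div]
        simp [Complex.norm_real, abs_of_pos hβ0, ← hβ]
        exact hβ0.ne'
      · unfold Psi
        rw [hwabs]
        refine Prod.ext ?_ ?_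
        · show ((Real.sqrt (2 - r ^ 2) : ℝ) : ℂ) * w = a
          rw [hw]
          rw [show ((Real.sqrt (2 - r ^ 2) : ℝ) : ℂ) * ((r : ℂ) * (a / (‖a‖ : ℂ)))
              = ((Real.sqrt (2 - r ^ 2) * r : ℝ) : ℂ) * (a / (‖a‖ : ℂ)) by
            push_cast; ring]
          rw [hkey]
          have hca : ((‖a‖ : ℝ) : ℂ) ≠ 0 := by exact_mod_cast ha'
          rw [mul_comm]
          exact div_mul_cancel₀ a hca
        · show ((1 - r ^ 2 : ℝ) : ℂ) * (b / (β : ℂ)) = b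
          rw [hr2]
          have : ((1 - (1 - β) : ℝ) : ℂ) = (β : ℂ) := by push_cast; ring
          rw [this]
          have hβc : (β : ℂ) ≠ 0 := by exact_mod_cast hβ0.ne'
          field_simp
  · -- injectivity on |w| < 1
    intro w p w' p' hw hp hw' hp' heq
    have h1 := congrArg Prod.fst heq
    have h2 := congrArg Prod.snd heq
    simp only [Psi] at h1 h2
    have habs : (1 - ‖w‖ ^ 2) = (1 - ‖w'‖ ^ 2) := by
      have := congrArg norm h2
      rw [norm_mul, norm_mul, Complex.norm_real, Complex.norm_real, Real.norm_eq_abs, Real.norm_eq_abs, hp, hp',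
        mul_one, mul_one] at this
      have e1 : |1 - ‖w‖ ^ 2| = 1 - ‖w‖ ^ 2 :=
        abs_of_nonneg (by nlinarith [norm_nonneg w])
      have e2 : |1 - ‖w'‖ ^ 2| = 1 - ‖w'‖ ^ 2 :=
        abs_of_nonneg (by nlinarith [norm_nonneg w'])
      rw [e1, e2] at this; exact this
    have hne : ((1 - ‖w‖ ^ 2 : ℝ) : ℂ) ≠ 0 := by
      have : (0:ℝ) < 1 - ‖w‖ ^ 2 := by nlinarith [norm_nonneg w]
      exact_mod_cast this.ne'
    have hpp : p = p' := by
      rw [← habs] at h2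
      exact mul_left_cancel₀ hne h2
    have hwe : ‖w‖ = ‖w'‖ := by
      nlinarith [norm_nonneg w, norm_nonneg w']
    have hsne : ((Real.sqrt (2 - ‖w‖ ^ 2) : ℝ) : ℂ) ≠ 0 := by
      have : (0:ℝ) < Real.sqrt (2 - ‖w‖ ^ 2) :=
        Real.sqrt_pos.mpr (by nlinarith [norm_nonneg w, sq_nonneg (1 - ‖w‖)])
      exact_mod_cast this.ne'
    rw [← hwe] at h1
    exact ⟨mul_left_cancel₀ hsne h1, hpp⟩
  · -- boundary
    intro w p w' p' hw hp hw' hp' heq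
    have h1 := congrArg Prod.fst heq
    have h2 := congrArg Prod.snd heq
    simp only [Psi, hw] at h1 h2
    have hp'ne : p' ≠ 0 := by
      intro h; rw [h] at hp'; simp at hp'
    have hw'1 : ‖w'‖ = 1 := by
      have h2' : ((1 - ‖w'‖ ^ 2 : ℝ) : ℂ) * p' = 0 := by
        rw [← h2]; norm_num
      rcases mul_eq_zero.mp h2' with h | h
      · have : (1 - ‖w'‖ ^ 2 : ℝ) = 0 := by exact_mod_cast h
        nlinarith [norm_nonneg w']
      · exact absurd h hp'ne
    rw [hw'1] at h1
    norm_num at h1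
    exact h1
end

section
/- For (a,b) on the unit 3-sphere with b ≠ 0, setting w = a/sqrt(1 + |b|) and p = b/|b| gives the inverse of Ψ: one has |w| < 1, |p| = 1, sqrt(2-|w|²)·w = a, and (1-|w|²)·p = b. -/
open Complex

/-- Inverse formula for Ψ: for (a,b) on the 3-sphere with b ≠ 0,
w = a/√(1+|b|) and p = b/|b| satisfy |w| < 1, |p| = 1, and Ψ(w,p) = (a,b). -/
theorem psi_inverse (a b : ℂ) (hab : ‖a‖ ^ 2 + ‖b‖ ^ 2 = 1)
    (hb : b ≠ 0) :
    ‖(a / ((Real.sqrt (1 + ‖b‖) : ℝ) : ℂ))‖ < 1 ∧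
    ‖(b / ((‖b‖ : ℝ) : ℂ))‖ = 1 ∧
    (Real.sqrt (2 - (‖(a / ((Real.sqrt (1 + ‖b‖) : ℝ) : ℂ))‖) ^ 2) : ℂ) *
      (a / ((Real.sqrt (1 + ‖b‖) : ℝ) : ℂ)) = a ∧
    ((1 - (‖(a / ((Real.sqrt (1 + ‖b‖) : ℝ) : ℂ))‖) ^ 2 : ℝ) : ℂ) *
      (b / ((‖b‖ : ℝ) : ℂ)) = b := by
  set r := ‖b‖ with hrdef
  have hr : 0 < r := norm_pos_iff.2 hb
  have hs : (0:ℝ) < Real.sqrt (1 + r) := Real.sqrt_pos.2 (by linarith)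
  have habs : ‖(a / ((Real.sqrt (1 + r) : ℝ) : ℂ))‖ ^ 2 = 1 - r := by
    rw [norm_div, Complex.norm_real, Real.norm_eq_abs, abs_of_pos hs, div_pow,
      Real.sq_sqrt (by linarith : (0:ℝ) ≤ 1 + r), div_eq_iff (by linarith : (1:ℝ) + r ≠ 0)]
    nlinarith
  refine ⟨?_, ?_, ?_, ?_⟩
  · nlinarith [norm_nonneg (a / ((Real.sqrt (1 + r) : ℝ) : ℂ))]
  · rw [norm_div, Complex.norm_real, Real.norm_eq_abs, abs_of_pos hr, div_self hr.ne']
  · have h2 : 2 - ‖(a / ((Real.sqrt (1 + r) : ℝ) : ℂ))‖ ^ 2 = 1 + r := by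
      rw [habs]; ring
    rw [h2]
    have hne : ((Real.sqrt (1 + r) : ℝ) : ℂ) ≠ 0 := Complex.ofReal_ne_zero.2 hs.ne'
    field_simp
  · rw [habs]
    have hne : ((r : ℝ) : ℂ) ≠ 0 := Complex.ofReal_ne_zero.2 hr.ne'
    push_cast
    field_simp
    ring
end
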